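/- For every integer n ≥ 3 there exists a continuous map ψ from the closed unit ball B^{n-1} ⊂ ℝ^{n-1} to the special orthogonal group SO(n) such that: (i) for every x with ‖x‖ = 1, the matrix ψ(x) fixes the first standard basis vector e₁ of ℝⁿ (equivalently, ψ(x) is block diagonal of the form diag(1, B) with B ∈ SO(n-1)); and (ii) the map x ↦ ψ(x)·e₁, restricted to the open unit ball, is a homeomorphism onto the unit sphere S^{n-1} ⊂ ℝⁿ minus the point e₁. -/

import Mathlib

open Matrix Metric

namespace Stmt0Aux

variable {m : ℕ}

lemma norm_sq (x : EuclideanSpace ℝ (Fin m)) : ‖x‖ ^ 2 = ∑ i, x i ^ 2 := by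
  rw [EuclideanSpace.norm_eq, Real.sq_sqrt (by positivity)]
  simp [Real.norm_eq_abs, sq_abs]

noncomputable def wv (x : EuclideanSpace ℝ (Fin m)) : Fin (m + 1) → ℝ :=
  Fin.cons (Real.sqrt (1 - ‖x‖ ^ 2)) (fun i => -x i)

def Dm (m : ℕ) : Matrix (Fin (m + 1)) (Fin (m + 1)) ℝ :=
  Matrix.diagonal (fun i => if i.val = 1 then (-1 : ℝ) else 1)

noncomputable def Mm (x : EuclideanSpace ℝ (Fin m)) : Matrix (Fin (m + 1)) (Fin (m + 1)) ℝ :=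
  1 - (2 : ℝ) • Matrix.vecMulVec (wv x) (wv x)

noncomputable def psiM (x : EuclideanSpace ℝ (Fin m)) : Matrix (Fin (m + 1)) (Fin (m + 1)) ℝ :=
  Mm x * Dm m

lemma wv_dot {x : EuclideanSpace ℝ (Fin m)} (hx : ‖x‖ ≤ 1) : wv x ⬝ᵥ wv x = 1 := by
  have h1 : (0:ℝ) ≤ 1 - ‖x‖ ^ 2 := by nlinarith [norm_nonneg x]
  simp only [dotProduct, Fin.sum_univ_succ, wv, Fin.cons_zero, Fin.cons_succ,
    Real.mul_self_sqrt h1, neg_mul_neg]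
  have := norm_sq x
  simp only [pow_two] at this
  linarith [this.symm]

lemma Mm_transpose (x : EuclideanSpace ℝ (Fin m)) : (Mm x)ᵀ = Mm x := by
  ext i j
  simp [Mm, transpose_apply, vecMulVec_apply, one_apply, mul_comm, eq_comm]

lemma Dm_transpose : (Dm m)ᵀ = Dm m := by
  simp [Dm, diagonal_transpose]

lemma Dm_mul_Dm : Dm m * Dm m = 1 := by
  rw [Dm, diagonal_mul_diagonal]
  convert diagonal_one
  rename_i i
  by_cases h : i.val = 1 <;> simp [h]

lemma vmv_mul_vmv (w : Fin (m+1) → ℝ) :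
    vecMulVec w w * vecMulVec w w = (w ⬝ᵥ w) • vecMulVec w w := by
  ext i j
  simp only [mul_apply, vecMulVec_apply, Matrix.smul_apply, smul_eq_mul, dotProduct,
    Finset.sum_mul]
  exact Finset.sum_congr rfl fun k _ => by ring

lemma Mm_mul_Mm {x : EuclideanSpace ℝ (Fin m)} (hx : ‖x‖ ≤ 1) : Mm x * Mm x = 1 := by
  have h := vmv_mul_vmv (wv x)
  rw [wv_dot hx, one_smul] at h
  simp only [Mm, sub_mul, mul_sub, one_mul, mul_one, smul_mul_assoc, mul_smul_comm, h,
    smul_smul]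
  abel_nf
  module

lemma Mm_det {x : EuclideanSpace ℝ (Fin m)} (hx : ‖x‖ ≤ 1) : (Mm x).det = -1 := by
  have : Mm x = 1 + replicateCol Unit ((-2 : ℝ) • wv x) * replicateRow Unit (wv x) := by
    rw [Mm, ← vecMulVec_eq, sub_eq_add_neg]
    congr 1
    ext i j
    simp [vecMulVec_apply]
    ring
  rw [this, det_one_add_replicateCol_mul_replicateRow, dotProduct_smul, wv_dot hx]
  norm_num

end Stmt0Aux

namespace Stmt0Aux

variable {m : ℕ}

lemma Dm_det (hm : 1 ≤ m) : (Dm m).det = -1 := by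
  rw [Dm, det_diagonal]
  rw [Finset.prod_eq_single (⟨1, by omega⟩ : Fin (m+1))]
  · simp
  · intro i _ hi
    have : i.val ≠ 1 := fun h => hi (Fin.ext h)
    simp [this]
  · simp

lemma psiM_orth {x : EuclideanSpace ℝ (Fin m)} (hx : ‖x‖ ≤ 1) :
    psiM x * (psiM x)ᵀ = 1 := by
  rw [psiM, transpose_mul, Dm_transpose, Mm_transpose, mul_assoc, ← mul_assoc (Dm m),
    Dm_mul_Dm, one_mul, Mm_mul_Mm hx]

lemma psiM_det {x : EuclideanSpace ℝ (Fin m)} (hm : 1 ≤ m) (hx : ‖x‖ ≤ 1) :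
    (psiM x).det = 1 := by
  rw [psiM, det_mul, Mm_det hx, Dm_det hm]
  norm_num

noncomputable def fv (x : EuclideanSpace ℝ (Fin m)) : Fin (m + 1) → ℝ :=
  Fin.cons (2 * ‖x‖ ^ 2 - 1) (fun i => 2 * Real.sqrt (1 - ‖x‖ ^ 2) * x i)

lemma psiM_mulVec {x : EuclideanSpace ℝ (Fin m)} (hx : ‖x‖ ≤ 1) :
    psiM x *ᵥ Pi.single (0 : Fin (m+1)) 1 = fv x := by
  have h1 : (0:ℝ) ≤ 1 - ‖x‖ ^ 2 := by nlinarith [norm_nonneg x]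
  funext i
  rw [mulVec_single]
  have hD : ((0 : Fin (m+1)).val = 1) = False := by simp
  have : psiM x i 0 = Mm x i 0 := by
    rw [psiM, Dm, mul_diagonal]
    simp
  show psiM x i 0 * 1 = fv x i
  rw [this, mul_one]
  refine Fin.cases ?_ ?_ i
  · simp [Mm, one_apply, vecMulVec_apply, wv, Fin.cons_zero, fv,
      Real.mul_self_sqrt h1]
    ring
  · intro j
    simp [Mm, one_apply, vecMulVec_apply, wv, Fin.cons_zero, Fin.cons_succ, fv,
      Fin.succ_ne_zero]
    ring

lemma fv_boundary {x : EuclideanSpace ℝ (Fin m)} (hx : ‖x‖ = 1) :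
    fv x = Pi.single (0 : Fin (m+1)) 1 := by
  funext i
  refine Fin.cases ?_ ?_ i
  · simp [fv, hx]; norm_num
  · intro j
    simp [fv, hx, Pi.single_apply, Fin.succ_ne_zero]

lemma fv_sphere {x : EuclideanSpace ℝ (Fin m)} (hx : ‖x‖ ≤ 1) :
    ∑ i, fv x i ^ 2 = 1 := by
  have h1 : (0:ℝ) ≤ 1 - ‖x‖ ^ 2 := by nlinarith [norm_nonneg x]
  simp only [Fin.sum_univ_succ, fv, Fin.cons_zero, Fin.cons_succ, mul_pow,
    Real.sq_sqrt h1]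
  rw [← Finset.mul_sum, ← norm_sq x]
  ring

lemma fv_ne {x : EuclideanSpace ℝ (Fin m)} (hx : ‖x‖ < 1) :
    fv x ≠ Pi.single (0 : Fin (m+1)) 1 := by
  intro h
  have := congrFun h 0
  simp only [fv, Fin.cons_zero, Pi.single_eq_same] at this
  nlinarith [norm_nonneg x]

end Stmt0Aux

namespace Stmt0Aux

variable {m : ℕ}

lemma continuous_wv_comp (k : Fin (m+1)) :
    Continuous fun x : EuclideanSpace ℝ (Fin m) => wv x k := by
  refine Fin.cases ?_ ?_ k
  · simpa [wv, Function.comp_def] using Real.continuous_sqrt.comp (by fun_prop)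
  · intro j
    simp only [wv, Fin.cons_succ]
    exact (PiLp.continuous_apply 2 _ j).neg

lemma continuous_psiM : Continuous fun x : EuclideanSpace ℝ (Fin m) => psiM x := by
  refine continuous_matrix fun i j => ?_
  simp only [psiM, Dm, mul_diagonal, Mm, Matrix.sub_apply, Matrix.smul_apply, vecMulVec_apply,
    smul_eq_mul, one_apply]
  have h1 := continuous_wv_comp (m := m) i
  have h2 := continuous_wv_comp (m := m) j
  exact (((continuous_const).sub ((continuous_const).mul (h1.mul h2))).mul continuous_const)

end Stmt0Aux

namespace Stmt0Aux

variable {m : ℕ}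

lemma continuous_fv : Continuous fun x : EuclideanSpace ℝ (Fin m) => fv x := by
  refine continuous_pi fun i => ?_
  refine Fin.cases ?_ ?_ i
  · simp only [fv, Fin.cons_zero]
    fun_prop
  · intro j
    simp only [fv, Fin.cons_succ]
    have : Continuous fun x : EuclideanSpace ℝ (Fin m) => x j := PiLp.continuous_apply 2 _ j
    have hs : Continuous fun x : EuclideanSpace ℝ (Fin m) => Real.sqrt (1 - ‖x‖ ^ 2) :=
      Real.continuous_sqrt.comp (by fun_prop)
    fun_prop

lemma sphere_y0_lt {y : Fin (m+1) → ℝ} (hy : ∑ i, y i ^ 2 = 1)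
    (hne : y ≠ Pi.single (0 : Fin (m+1)) 1) : y 0 < 1 := by
  rw [Fin.sum_univ_succ] at hy
  have hrest : (0:ℝ) ≤ ∑ j : Fin m, y j.succ ^ 2 :=
    Finset.sum_nonneg fun _ _ => sq_nonneg _
  rcases lt_or_eq_of_le (show y 0 ≤ 1 by nlinarith) with h | h
  · exact h
  · exfalso
    apply hne
    have hz : ∑ j : Fin m, y j.succ ^ 2 = 0 := by nlinarith
    funext i
    refine Fin.cases ?_ ?_ i
    · simp [h]
    · intro j
      have := (Finset.sum_eq_zero_iff_of_nonneg (fun _ _ => sq_nonneg _)).mp hz j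
        (Finset.mem_univ j)
      have hj : y j.succ = 0 := by nlinarith [this]
      simp [hj, Pi.single_apply, Fin.succ_ne_zero]

lemma sphere_rest {y : Fin (m+1) → ℝ} (hy : ∑ i, y i ^ 2 = 1) :
    ∑ j : Fin m, y j.succ ^ 2 = 1 - y 0 ^ 2 := by
  rw [Fin.sum_univ_succ] at hy
  linarith

noncomputable def gv (y : Fin (m+1) → ℝ) : EuclideanSpace ℝ (Fin m) :=
  WithLp.toLp 2 (fun i => y i.succ / Real.sqrt (2 * (1 - y 0)))

lemma gv_norm_sq {y : Fin (m+1) → ℝ} (hy : ∑ i, y i ^ 2 = 1) (h0 : y 0 < 1) :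
    ‖gv y‖ ^ 2 = (1 + y 0) / 2 := by
  have ht : (0:ℝ) < 2 * (1 - y 0) := by linarith
  rw [norm_sq]
  simp only [gv, div_pow, Real.sq_sqrt ht.le]
  rw [← Finset.sum_div, sphere_rest hy]
  have hne : (1:ℝ) - y 0 ≠ 0 := by linarith
  field_simp
  ring

lemma gv_norm_lt {y : Fin (m+1) → ℝ} (hy : ∑ i, y i ^ 2 = 1) (h0 : y 0 < 1) :
    ‖gv y‖ < 1 := by
  have h1 := gv_norm_sq hy h0
  have h2 : y 0 ^ 2 ≤ 1 := by
    have := sphere_rest hy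
    have hrest : (0:ℝ) ≤ ∑ j : Fin m, y j.succ ^ 2 :=
      Finset.sum_nonneg fun _ _ => sq_nonneg _
    linarith
  nlinarith [norm_nonneg (gv y)]

lemma fv_gv {y : Fin (m+1) → ℝ} (hy : ∑ i, y i ^ 2 = 1) (h0 : y 0 < 1) :
    fv (gv y) = y := by
  have ht : (0:ℝ) < 2 * (1 - y 0) := by linarith
  have hns := gv_norm_sq hy h0
  funext i
  refine Fin.cases ?_ ?_ i
  · simp only [fv, Fin.cons_zero, hns]
    ring
  · intro j
    simp only [fv, Fin.cons_succ, hns]; simp only [gv]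
    have h1 : 1 - (1 + y 0) / 2 = (2 * (1 - y 0)) / 4 := by ring
    rw [h1]
    have h2 : Real.sqrt (2 * (1 - y 0) / 4) = Real.sqrt (2 * (1 - y 0)) / 2 := by
      rw [show 2 * (1 - y 0) / 4 = (Real.sqrt (2 * (1 - y 0)) / 2) ^ 2 by
        rw [div_pow, Real.sq_sqrt ht.le]; norm_num]
      exact Real.sqrt_sq (by positivity)
    rw [h2]
    have h3 : Real.sqrt (2 * (1 - y 0)) ≠ 0 := by positivity
    field_simp

lemma gv_fv {x : EuclideanSpace ℝ (Fin m)} (hx : ‖x‖ < 1) : gv (fv x) = x := by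
  have h1 : (0:ℝ) < 1 - ‖x‖ ^ 2 := by nlinarith [norm_nonneg x]
  ext i
  simp only [gv, fv, Fin.cons_zero, Fin.cons_succ]
  have h2 : 2 * (1 - (2 * ‖x‖ ^ 2 - 1)) = 4 * (1 - ‖x‖ ^ 2) := by ring
  rw [h2]
  have h3 : Real.sqrt (4 * (1 - ‖x‖ ^ 2)) = 2 * Real.sqrt (1 - ‖x‖ ^ 2) := by
    rw [show (4:ℝ) * (1 - ‖x‖ ^ 2) = (2 * Real.sqrt (1 - ‖x‖^2))^2 by
      rw [mul_pow, Real.sq_sqrt h1.le]; norm_num]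
    exact Real.sqrt_sq (by positivity)
  rw [h3]
  have h4 : Real.sqrt (1 - ‖x‖ ^ 2) ≠ 0 := by positivity
  field_simp

end Stmt0Aux

namespace Stmt0Aux

noncomputable def phiH (m : ℕ) :
    (ball (0 : EuclideanSpace ℝ (Fin m)) 1 : Set (EuclideanSpace ℝ (Fin m))) ≃ₜ
    (({y : Fin (m+1) → ℝ | ∑ i, y i ^ 2 = 1} \ {Pi.single (0 : Fin (m+1)) 1}) :
      Set (Fin (m+1) → ℝ)) where
  toFun x := ⟨fv x.1, by
    have hx : ‖x.1‖ < 1 := mem_ball_zero_iff.mp x.2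
    exact ⟨fv_sphere hx.le, fun h => fv_ne hx (by simpa using h)⟩⟩
  invFun y := ⟨gv y.1, by
    have h1 : ∑ i, y.1 i ^ 2 = 1 := y.2.1
    have h2 : y.1 ≠ Pi.single 0 1 := fun h => y.2.2 (by simpa using h)
    exact mem_ball_zero_iff.mpr (gv_norm_lt h1 (sphere_y0_lt h1 h2))⟩
  left_inv x := Subtype.ext (gv_fv (mem_ball_zero_iff.mp x.2))
  right_inv y := Subtype.ext (fv_gv y.2.1
    (sphere_y0_lt y.2.1 (fun h => y.2.2 (by simpa using h))))
  continuous_toFun := by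
    apply Continuous.subtype_mk
    exact continuous_fv.comp continuous_subtype_val
  continuous_invFun := by
    apply Continuous.subtype_mk
    have key : Continuous fun (y : (({y : Fin (m+1) → ℝ | ∑ i, y i ^ 2 = 1} \
        {Pi.single (0 : Fin (m+1)) 1}) : Set (Fin (m+1) → ℝ))) =>
        (fun i => y.1 i.succ / Real.sqrt (2 * (1 - y.1 0)) : Fin m → ℝ) := by
      refine continuous_pi fun i => Continuous.div ?_ ?_ ?_
      · exact (continuous_apply i.succ).comp continuous_subtype_val
      · exact Real.continuous_sqrt.comp
          (continuous_const.mul (continuous_const.sub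
            ((continuous_apply 0).comp continuous_subtype_val)))
      · intro y
        have h1 : ∑ i, y.1 i ^ 2 = 1 := y.2.1
        have h2 : y.1 ≠ Pi.single 0 1 := fun h => y.2.2 (by simpa using h)
        have := sphere_y0_lt h1 h2
        exact ne_of_gt (Real.sqrt_pos.mpr (by linarith))
    exact (PiLp.continuous_toLp 2 (fun _ : Fin m => ℝ)).comp key

end Stmt0Aux

open Stmt0Aux in
theorem stmt_0 (n : ℕ) (hn : 3 ≤ n) :
    ∃ ψ : EuclideanSpace ℝ (Fin (n - 1)) → Matrix (Fin n) (Fin n) ℝ,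
      ContinuousOn ψ (closedBall 0 1) ∧
      (∀ x ∈ closedBall (0 : EuclideanSpace ℝ (Fin (n - 1))) 1,
        ψ x * (ψ x)ᵀ = 1 ∧ (ψ x).det = 1) ∧
      (∀ x : EuclideanSpace ℝ (Fin (n - 1)), ‖x‖ = 1 →
        (ψ x).mulVec (Pi.single (⟨0, by omega⟩ : Fin n) 1) =
          Pi.single (⟨0, by omega⟩ : Fin n) 1) ∧
      ∃ φ : (ball (0 : EuclideanSpace ℝ (Fin (n - 1))) 1 :
              Set (EuclideanSpace ℝ (Fin (n - 1)))) ≃ₜ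
          ({y : Fin n → ℝ | ∑ i, y i ^ 2 = 1} \
            {Pi.single (⟨0, by omega⟩ : Fin n) 1} : Set (Fin n → ℝ)),
        ∀ x : (ball (0 : EuclideanSpace ℝ (Fin (n - 1))) 1 :
                Set (EuclideanSpace ℝ (Fin (n - 1)))),
          (φ x : Fin n → ℝ) =
            (ψ (x : EuclideanSpace ℝ (Fin (n - 1)))).mulVec
              (Pi.single (⟨0, by omega⟩ : Fin n) 1) := by
  obtain ⟨m, hm, rfl⟩ : ∃ m, 2 ≤ m ∧ n = m + 1 := ⟨n - 1, by omega, by omega⟩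
  refine ⟨fun x => psiM x, continuous_psiM.continuousOn, ?_, ?_, ?_⟩
  · intro x hx
    have h : ‖x‖ ≤ 1 := mem_closedBall_zero_iff.mp hx
    exact ⟨psiM_orth h, psiM_det (by omega) h⟩
  · intro x hx
    have h := psiM_mulVec (m := m) (x := x) hx.le
    rw [fv_boundary hx] at h
    exact h
  · refine ⟨phiH m, fun x => ?_⟩
    have hx : ‖x.1‖ ≤ 1 := (mem_ball_zero_iff.mp x.2).le
    show (phiH m x : Fin (m+1) → ℝ) = psiM x.1 *ᵥ Pi.single (0 : Fin (m+1)) 1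
    rw [psiM_mulVec hx]
    rfl
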